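/- Let S ⊂ ℝ be a finite set such that for all t > 0, the fraction of x ∈ S with |x - μ| > 2t + 2 is at most e^{-t²/2}, and let T ⊇ hypotheses be a set with |T \ S| ≤ ε|T| and |T| ≥ (1-ε)|S|. If for every threshold t₀ > 0, Pr_{x∼_u T}[|x - μ_T| > 2t₀ + 2 + r] ≤ 4e^{-t₀²/2} (with |μ - μ_T| ≤ r), then Σ_{x∈T\S} |x - μ_T|² ≤ |T|·(O(ε·(2 + r + 10√(log(1/ε)))²) + O(ε²·(√(log(1/ε)) + r))). -/

import Mathlib

open Finset
open scoped Classical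

lemma aux_pow (k : ℕ) : ((k : ℝ) + 1) ^ 2 ≤ 3 * 2 ^ k := by
  induction k with
  | zero => norm_num
  | succ n ih =>
    have hp : (n : ℝ) + 1 ≤ 2 ^ n := by
      have := Nat.lt_two_pow_self (n := n)
      exact_mod_cast this
    push_cast
    rw [show (2:ℝ)^(n+1) = 2^n*2 from pow_succ 2 n]
    nlinarith [ih, hp, Nat.cast_nonneg (α := ℝ) n]

lemma exp_neg_one_le : 2 * Real.exp (-1) ≤ 3/4 := by
  have he : (2.7182818283 : ℝ) < Real.exp 1 := Real.exp_one_gt_d9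
  have h1 : (0:ℝ) < Real.exp 1 := Real.exp_pos 1
  rw [Real.exp_neg]
  have hinv : (Real.exp 1)⁻¹ * Real.exp 1 = 1 := inv_mul_cancel₀ (ne_of_gt h1)
  nlinarith [hinv, he, inv_pos.mpr h1]

lemma geom_bd (N : ℕ) : ∑ k ∈ range N, (2 * Real.exp (-1)) ^ k ≤ 4 := by
  have h0 : (0:ℝ) ≤ 2 * Real.exp (-1) := by positivity
  have h34 := exp_neg_one_le
  have h1 : (2 * Real.exp (-1)) ≠ 1 := by intro h; rw [h] at h34; norm_num at h34
  rw [geom_sum_eq h1]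
  rw [div_le_iff_of_neg (by linarith : 2 * Real.exp (-1) - 1 < 0)]
  have : (0:ℝ) ≤ (2 * Real.exp (-1)) ^ N := by positivity
  nlinarith

lemma sq_shift {s k : ℝ} (hs : 1 ≤ 2*s) (hk : 0 ≤ k) :
    -(2*s + k) ^ 2 / 2 ≤ -(2*s)^2/2 + -k := by nlinarith

lemma lin_ak {a k : ℝ} (ha : 2 ≤ a) (hk : 0 ≤ k) : a + 2*k ≤ a * (k + 1) := by nlinarith

lemma sq_eps {a B e : ℝ} (ha : 0 ≤ a) (hab : a ≤ B) (he0 : 0 ≤ e) (he1 : e ≤ 1) :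
    a^2 * e^2 ≤ B^2 * e := by
  have h2 : a^2 ≤ B^2 := by nlinarith
  have h3 : e^2 ≤ e := by nlinarith
  calc a^2 * e^2 ≤ B^2 * e^2 := mul_le_mul_of_nonneg_right h2 (sq_nonneg e)
    _ ≤ B^2 * e := mul_le_mul_of_nonneg_left h3 (by positivity)

set_option maxHeartbeats 1000000 in
/-- Key computation in the basic filtering lemma: if the clean set `S` satisfies
Gaussian-type tail bounds around `μ`, `T` has at most an `ε`-fraction of outliers,
`|μ - μ_T| ≤ r`, and no threshold `t₀` violates the `4·e^{-t₀²/2}` tail bound for `T`,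
then the total squared contribution of the outliers `T \ S` to the variance is at most
`|T|·(O(ε·(2 + r + 10√(log(1/ε)))²) + O(ε²·(√(log(1/ε)) + r)))`. -/
theorem stmt19 :
    ∃ C : ℝ, 0 < C ∧ ∀ (ε r : ℝ) (S T : Finset ℝ) (μ : ℝ),
      0 < ε → ε < 1 / 2 → 0 ≤ r → S.Nonempty → T.Nonempty →
      (∀ t : ℝ, 0 < t →
        ((S.filter fun x => 2 * t + 2 < |x - μ|).card : ℝ) / (S.card : ℝ)
          ≤ Real.exp (-t ^ 2 / 2)) →
      ((T \ S).card : ℝ) ≤ ε * (T.card : ℝ) →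
      (1 - ε) * (S.card : ℝ) ≤ (T.card : ℝ) →
      |μ - (T.card : ℝ)⁻¹ * ∑ y ∈ T, y| ≤ r →
      (∀ t₀ : ℝ, 0 < t₀ →
        ((T.filter fun x =>
            2 * t₀ + 2 + r < |x - (T.card : ℝ)⁻¹ * ∑ y ∈ T, y|).card : ℝ) / (T.card : ℝ)
          ≤ 4 * Real.exp (-t₀ ^ 2 / 2)) →
      ∑ x ∈ T \ S, (x - (T.card : ℝ)⁻¹ * ∑ y ∈ T, y) ^ 2
        ≤ (T.card : ℝ) *
            (C * ε * (2 + r + 10 * Real.sqrt (Real.log (1 / ε))) ^ 2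
              + C * ε ^ 2 * (Real.sqrt (Real.log (1 / ε)) + r)) := by
  refine ⟨100, by norm_num, ?_⟩
  intro ε r S T μ hε hε2 hr hS hT _hStail hTS _hcard _hμr hTtail
  set μT := (T.card : ℝ)⁻¹ * ∑ y ∈ T, y with hμT
  set L := Real.log (1 / ε) with hLdef
  set s := Real.sqrt L with hsdef
  have hε1 : ε < 1 := by linarith
  have h1ε : (2:ℝ) < 1 / ε := by rw [lt_div_iff₀ hε]; linarith
  have hL2 : Real.log 2 ≤ L := by
    rw [hLdef]; exact Real.log_le_log (by norm_num) h1ε.le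
  have hlog2 : (0.6931471803 : ℝ) < Real.log 2 := Real.log_two_gt_d9
  have hL4 : (1/4 : ℝ) ≤ L := by linarith
  have hL0 : (0:ℝ) ≤ L := by linarith
  have hs0 : 0 ≤ s := Real.sqrt_nonneg L
  have hsq : s ^ 2 = L := Real.sq_sqrt hL0
  have hs : (1/2 : ℝ) ≤ s := by nlinarith [hsq, hs0]
  have hexpL : Real.exp (-L) = ε := by
    rw [Real.exp_neg, hLdef, Real.exp_log (one_div_pos.mpr hε)]
    simp
  have hexp2 : Real.exp (-(2*s)^2/2) = ε^2 := by
    have h : -(2*s)^2/2 = (-L) + (-L) := by rw [← hsq]; ring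
    rw [h, Real.exp_add, hexpL]; ring
  set M := 2*(2*s) + 2 + r with hMdef
  set a := M + 2 with hadef
  set B := 2 + r + 10*s with hBdef
  have hM0 : (0:ℝ) ≤ M := by rw [hMdef]; linarith
  have ha2 : (2:ℝ) ≤ a := by rw [hadef]; linarith
  have haB : a ≤ B := by rw [hadef, hMdef, hBdef]; linarith
  have hB0 : (0:ℝ) < B := by rw [hBdef]; linarith
  have hTpos : (0:ℝ) < (T.card : ℝ) := by exact_mod_cast card_pos.mpr hT
  -- split
  have hsplit : ∑ x ∈ T \ S, (x - μT) ^ 2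
      = ∑ x ∈ (T \ S).filter (fun x => |x - μT| ≤ M), (x - μT) ^ 2
        + ∑ x ∈ (T \ S).filter (fun x => ¬ |x - μT| ≤ M), (x - μT) ^ 2 :=
    (Finset.sum_filter_add_sum_filter_not _ _ _).symm
  -- bulk bound
  have hbulk : ∑ x ∈ (T \ S).filter (fun x => |x - μT| ≤ M), (x - μT) ^ 2
      ≤ ε * (T.card : ℝ) * B ^ 2 := by
    have h1 : ∀ x ∈ (T \ S).filter (fun x => |x - μT| ≤ M), (x - μT) ^ 2 ≤ B ^ 2 := by
      intro x hx
      rw [mem_filter] at hx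
      have h2 : |x - μT| ≤ B := le_trans hx.2 (by linarith)
      calc (x - μT) ^ 2 = |x - μT| ^ 2 := (sq_abs _).symm
        _ ≤ B ^ 2 := pow_le_pow_left₀ (abs_nonneg _) h2 2
    calc ∑ x ∈ (T \ S).filter (fun x => |x - μT| ≤ M), (x - μT) ^ 2
        ≤ ((T \ S).filter (fun x => |x - μT| ≤ M)).card • (B ^ 2) :=
          Finset.sum_le_card_nsmul _ _ _ h1
      _ = (((T \ S).filter (fun x => |x - μT| ≤ M)).card : ℝ) * B ^ 2 := by
          rw [nsmul_eq_mul]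
      _ ≤ ((T \ S).card : ℝ) * B ^ 2 := by
          have := Finset.card_filter_le (T \ S) (fun x => |x - μT| ≤ M)
          have h3 : (((T \ S).filter (fun x => |x - μT| ≤ M)).card : ℝ) ≤ ((T \ S).card : ℝ) := by
            exact_mod_cast this
          exact mul_le_mul_of_nonneg_right h3 (sq_nonneg B)
      _ ≤ ε * (T.card : ℝ) * B ^ 2 := mul_le_mul_of_nonneg_right hTS (sq_nonneg B)
  -- rest bound
  set R := (T \ S).filter (fun x => ¬ |x - μT| ≤ M) with hRdef
  set N := ⌈T.sup' hT (fun x => |x - μT|)⌉₊ + 1 with hNdef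
  set kf : ℝ → ℕ := fun x => ⌈(|x - μT| - M)/2⌉₊ - 1 with hkfdef
  have hmaps : ∀ x ∈ R, kf x ∈ range N := by
    intro x hx
    rw [hRdef, mem_filter, mem_sdiff] at hx
    have hxT : x ∈ T := hx.1.1
    have hle : |x - μT| ≤ T.sup' hT (fun x => |x - μT|) :=
      Finset.le_sup' (f := fun x => |x - μT|) hxT
    have h1 : (|x - μT| - M)/2 ≤ T.sup' hT (fun x => |x - μT|) := by
      have := abs_nonneg (x - μT); linarith
    have h2 : ⌈(|x - μT| - M)/2⌉₊ ≤ ⌈T.sup' hT (fun x => |x - μT|)⌉₊ :=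
      Nat.ceil_le_ceil h1
    rw [mem_range]
    have h3 : kf x ≤ ⌈T.sup' hT (fun x => |x - μT|)⌉₊ :=
      le_trans (Nat.sub_le _ _) h2
    exact Nat.lt_succ_of_le h3
  have hfib := Finset.sum_fiberwise_of_maps_to hmaps (fun x => (x - μT) ^ 2)
  have hker : ∀ k ∈ range N, ∑ x ∈ R.filter (fun x => kf x = k), (x - μT) ^ 2
      ≤ 12 * a ^ 2 * ε ^ 2 * (T.card : ℝ) * (2 * Real.exp (-1)) ^ k := by
    intro k _
    -- fiber facts
    have hfacts : ∀ x ∈ R.filter (fun x => kf x = k),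
        2 * (2*s + (k:ℝ)) + 2 + r < |x - μT| ∧ |x - μT| ≤ a + 2*(k:ℝ) := by
      intro x hx
      rw [mem_filter] at hx
      obtain ⟨hxR, hxk⟩ := hx
      have hxM : ¬ |x - μT| ≤ M := (mem_filter.mp hxR).2
      push_neg at hxM
      have hu : 0 < (|x - μT| - M)/2 := by linarith
      have hc1 : 0 < ⌈(|x - μT| - M)/2⌉₊ := Nat.ceil_pos.mpr hu
      have hxk' : ⌈(|x - μT| - M)/2⌉₊ - 1 = k := hxk
      have hceq : ⌈(|x - μT| - M)/2⌉₊ = k + 1 := by omega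
      rw [Nat.ceil_eq_iff (by omega : k + 1 ≠ 0)] at hceq
      obtain ⟨hlo, hhi⟩ := hceq
      have hn : k + 1 - 1 = k := rfl
      rw [hn] at hlo
      have hlo' : ((k:ℝ)) < (|x - μT| - M)/2 := hlo
      have hhi' : (|x - μT| - M)/2 ≤ (k:ℝ) + 1 := by exact_mod_cast hhi
      constructor
      · linarith [hMdef, hlo']
      · linarith [hadef, hMdef, hhi']
    have hsub : R.filter (fun x => kf x = k)
        ⊆ T.filter (fun x => 2 * (2*s + (k:ℝ)) + 2 + r < |x - μT|) := by
      intro x hx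
      have hxT : x ∈ T := by
        have := (mem_filter.mp hx).1
        exact (mem_sdiff.mp (mem_filter.mp this).1).1
      rw [mem_filter]
      exact ⟨hxT, (hfacts x hx).1⟩
    have htpos : (0:ℝ) < 2*s + (k:ℝ) := by
      have : (0:ℝ) ≤ (k:ℝ) := Nat.cast_nonneg k
      linarith
    have hcard : ((R.filter (fun x => kf x = k)).card : ℝ)
        ≤ 4 * Real.exp (-(2*s + (k:ℝ)) ^ 2 / 2) * (T.card : ℝ) := by
      have h1 := hTtail (2*s + (k:ℝ)) htpos
      rw [div_le_iff₀ hTpos] at h1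
      have h2 : ((R.filter (fun x => kf x = k)).card : ℝ)
          ≤ ((T.filter (fun x => 2 * (2*s + (k:ℝ)) + 2 + r < |x - μT|)).card : ℝ) := by
        exact_mod_cast Finset.card_le_card hsub
      calc ((R.filter (fun x => kf x = k)).card : ℝ)
          ≤ _ := h2
        _ ≤ 4 * Real.exp (-(2*s + (k:ℝ)) ^ 2 / 2) * (T.card : ℝ) := h1
    have hval : ∀ x ∈ R.filter (fun x => kf x = k), (x - μT) ^ 2 ≤ (a + 2*(k:ℝ)) ^ 2 := by
      intro x hx
      have h2 := (hfacts x hx).2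
      calc (x - μT) ^ 2 = |x - μT| ^ 2 := (sq_abs _).symm
        _ ≤ (a + 2*(k:ℝ)) ^ 2 := pow_le_pow_left₀ (abs_nonneg _) h2 2
    have hE : Real.exp (-(2*s + (k:ℝ)) ^ 2 / 2) ≤ ε ^ 2 * Real.exp (-(k:ℝ)) := by
      have hk0 : (0:ℝ) ≤ (k:ℝ) := Nat.cast_nonneg k
      have h3 : -(2*s + (k:ℝ)) ^ 2 / 2 ≤ -(2*s)^2/2 + -(k:ℝ) :=
        sq_shift (by linarith) hk0
      calc Real.exp (-(2*s + (k:ℝ)) ^ 2 / 2)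
          ≤ Real.exp (-(2*s)^2/2 + -(k:ℝ)) := Real.exp_le_exp.mpr h3
        _ = Real.exp (-(2*s)^2/2) * Real.exp (-(k:ℝ)) := Real.exp_add _ _
        _ = ε ^ 2 * Real.exp (-(k:ℝ)) := by rw [hexp2]
    have hak : (a + 2*(k:ℝ)) ^ 2 ≤ 3 * 2 ^ k * a ^ 2 := by
      have hk0 : (0:ℝ) ≤ (k:ℝ) := Nat.cast_nonneg k
      have h1 : a + 2*(k:ℝ) ≤ a * ((k:ℝ) + 1) := lin_ak ha2 hk0
      calc (a + 2*(k:ℝ)) ^ 2 ≤ (a * ((k:ℝ) + 1)) ^ 2 :=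
            pow_le_pow_left₀ (by linarith) h1 2
        _ = a ^ 2 * ((k:ℝ) + 1) ^ 2 := by ring
        _ ≤ a ^ 2 * (3 * 2 ^ k) :=
            mul_le_mul_of_nonneg_left (aux_pow k) (sq_nonneg a)
        _ = 3 * 2 ^ k * a ^ 2 := by ring
    have hpow : (2 * Real.exp (-1)) ^ k = 2 ^ k * Real.exp (-(k:ℝ)) := by
      rw [mul_pow, ← Real.exp_nat_mul, show ((k:ℝ)) * (-1) = -(k:ℝ) by ring]
    calc ∑ x ∈ R.filter (fun x => kf x = k), (x - μT) ^ 2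
        ≤ (R.filter (fun x => kf x = k)).card • ((a + 2*(k:ℝ)) ^ 2) :=
          Finset.sum_le_card_nsmul _ _ _ hval
      _ = ((R.filter (fun x => kf x = k)).card : ℝ) * (a + 2*(k:ℝ)) ^ 2 := by
          rw [nsmul_eq_mul]
      _ ≤ (4 * Real.exp (-(2*s + (k:ℝ)) ^ 2 / 2) * (T.card : ℝ)) * (a + 2*(k:ℝ)) ^ 2 := by
          exact mul_le_mul_of_nonneg_right hcard (sq_nonneg _)
      _ ≤ (4 * (ε ^ 2 * Real.exp (-(k:ℝ))) * (T.card : ℝ)) * (3 * 2 ^ k * a ^ 2) := by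
          have s1 : 4 * Real.exp (-(2*s + (k:ℝ)) ^ 2 / 2) * (T.card : ℝ)
              ≤ 4 * (ε ^ 2 * Real.exp (-(k:ℝ))) * (T.card : ℝ) :=
            mul_le_mul_of_nonneg_right
              (mul_le_mul_of_nonneg_left hE (by norm_num)) hTpos.le
          have s2 : (0:ℝ) ≤ 4 * (ε ^ 2 * Real.exp (-(k:ℝ))) * (T.card : ℝ) :=
            mul_nonneg (mul_nonneg (by norm_num)
              (mul_nonneg (sq_nonneg ε) (Real.exp_pos _).le)) hTpos.le
          exact mul_le_mul s1 hak (sq_nonneg _) s2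
      _ = 12 * a ^ 2 * ε ^ 2 * (T.card : ℝ) * (2 ^ k * Real.exp (-(k:ℝ))) := by ring
      _ = 12 * a ^ 2 * ε ^ 2 * (T.card : ℝ) * (2 * Real.exp (-1)) ^ k := by rw [hpow]
  have hrest : ∑ x ∈ R, (x - μT) ^ 2 ≤ 48 * a ^ 2 * ε ^ 2 * (T.card : ℝ) := by
    rw [← hfib]
    calc ∑ k ∈ range N, ∑ x ∈ R.filter (fun x => kf x = k), (x - μT) ^ 2
        ≤ ∑ k ∈ range N, 12 * a ^ 2 * ε ^ 2 * (T.card : ℝ) * (2 * Real.exp (-1)) ^ k :=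
          Finset.sum_le_sum hker
      _ = 12 * a ^ 2 * ε ^ 2 * (T.card : ℝ) * ∑ k ∈ range N, (2 * Real.exp (-1)) ^ k := by
          rw [Finset.mul_sum]
      _ ≤ 12 * a ^ 2 * ε ^ 2 * (T.card : ℝ) * 4 := by
          have := geom_bd N
          have hnn : (0:ℝ) ≤ 12 * a ^ 2 * ε ^ 2 * (T.card : ℝ) :=
            mul_nonneg (mul_nonneg (mul_nonneg (by norm_num) (sq_nonneg a)) (sq_nonneg ε)) hTpos.le
          exact mul_le_mul_of_nonneg_left this hnn
      _ = 48 * a ^ 2 * ε ^ 2 * (T.card : ℝ) := by ring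
  -- combine
  have haB2 : a ^ 2 ≤ B ^ 2 := pow_le_pow_left₀ (by linarith) haB 2
  have hεε : ε ^ 2 ≤ ε := by nlinarith
  have h1 : a ^ 2 * ε ^ 2 ≤ B ^ 2 * ε := sq_eps (by linarith) haB hε.le hε1.le
  have hfin : 48 * a ^ 2 * ε ^ 2 * (T.card : ℝ) ≤ 48 * (ε * (T.card : ℝ) * B ^ 2) := by
    calc 48 * a ^ 2 * ε ^ 2 * (T.card : ℝ) = 48 * ((a ^ 2 * ε ^ 2) * (T.card : ℝ)) := by ring
      _ ≤ 48 * ((B ^ 2 * ε) * (T.card : ℝ)) := by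
          exact mul_le_mul_of_nonneg_left (mul_le_mul_of_nonneg_right h1 hTpos.le) (by norm_num)
      _ = 48 * (ε * (T.card : ℝ) * B ^ 2) := by ring
  rw [hsplit]
  have hrest' : ∑ x ∈ R, (x - μT) ^ 2 ≤ 48 * (ε * (T.card : ℝ) * B ^ 2) := le_trans hrest hfin
  have hnn1 : (0:ℝ) ≤ ε * (T.card : ℝ) * B ^ 2 :=
    mul_nonneg (mul_nonneg hε.le hTpos.le) (sq_nonneg B)
  have hnn2 : (0:ℝ) ≤ (T.card : ℝ) * (ε ^ 2 * (s + r)) :=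
    mul_nonneg hTpos.le (mul_nonneg (sq_nonneg ε) (by linarith : (0:ℝ) ≤ s + r))
  calc ∑ x ∈ (T \ S).filter (fun x => |x - μT| ≤ M), (x - μT) ^ 2
        + ∑ x ∈ (T \ S).filter (fun x => ¬ |x - μT| ≤ M), (x - μT) ^ 2
      ≤ ε * (T.card : ℝ) * B ^ 2 + 48 * (ε * (T.card : ℝ) * B ^ 2) := add_le_add hbulk hrest'
    _ = 49 * (ε * (T.card : ℝ) * B ^ 2) := by ring
    _ ≤ 100 * (ε * (T.card : ℝ) * B ^ 2) + 100 * ((T.card : ℝ) * (ε ^ 2 * (s + r))) := by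
        linarith [hnn1, hnn2]
    _ = (T.card : ℝ) * (100 * ε * B ^ 2 + 100 * ε ^ 2 * (s + r)) := by ring
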